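/- A positive even integer n is superperfect if and only if n = 2^(p-1) for some natural number p such that 2^p - 1 is prime. -/

import Mathlib

open ArithmeticFunction Finset
open scoped ArithmeticFunction.sigma

private lemma sigma_one_two_pow (k : ℕ) : σ 1 (2 ^ k) = 2 ^ (k + 1) - 1 := by
  rw [sigma_one_apply_prime_pow Nat.prime_two]
  induction k with
  | zero => rfl
  | succ k ih =>
    rw [Finset.sum_range_succ, ih]
    have h1 : (1:ℕ) ≤ 2 ^ (k+1) := Nat.one_le_two_pow
    have h2 : (2:ℕ) ^ (k+2) = 2 ^ (k+1) + 2 ^ (k+1) := by ring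
    omega

private lemma sigma_one_prime {p : ℕ} (hp : p.Prime) : σ 1 p = p + 1 := by
  rw [sigma_one_apply, hp.divisors, Finset.sum_insert (by simp [hp.one_lt.ne]),
    Finset.sum_singleton]
  omega

private lemma prime_of_sigma_one {t : ℕ} (ht : 1 < t) (h : σ 1 t = t + 1) : t.Prime := by
  rw [sigma_one_apply, Nat.sum_divisors_eq_sum_properDivisors_add_self] at h
  exact Nat.sum_properDivisors_eq_one_iff_prime.mp (by omega)

private lemma le_sigma_one {m : ℕ} (hm : 1 < m) : m + 1 ≤ σ 1 m := by
  rw [sigma_one_apply, Nat.sum_divisors_eq_sum_properDivisors_add_self]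
  have h1 : 1 ∈ m.properDivisors := Nat.one_mem_properDivisors_iff_one_lt.mpr hm
  have h2 : (1:ℕ) ≤ ∑ x ∈ m.properDivisors, x :=
    Finset.single_le_sum (f := fun d => d) (fun i _ => Nat.zero_le i) h1
  omega

private lemma three_divisors_le {N S : ℕ} (hN : N ≠ 0) (hS : S ∣ N) (h1S : 1 < S)
    (hSN : S < N) : 1 + S + N ≤ σ 1 N := by
  rw [sigma_one_apply]
  have hsub : ({1, S, N} : Finset ℕ) ⊆ N.divisors := by
    intro x hx
    simp only [Finset.mem_insert, Finset.mem_singleton] at hx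
    rcases hx with rfl | rfl | rfl
    · exact Nat.one_mem_divisors.mpr hN
    · exact Nat.mem_divisors.mpr ⟨hS, hN⟩
    · exact Nat.mem_divisors_self _ hN
  calc 1 + S + N = ∑ d ∈ ({1, S, N} : Finset ℕ), d := by
        rw [Finset.sum_insert (by simp; omega), Finset.sum_insert (by simp; omega),
          Finset.sum_singleton]
        omega
    _ ≤ _ := Finset.sum_le_sum_of_subset hsub

/-- A positive even integer `n` is superperfect iff `n = 2^(p-1)` for some `p` with
`2^p - 1` prime. -/
theorem even_superperfect_iff (n : ℕ) (hn : 0 < n) (heven : Even n) :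
    (∑ d ∈ Nat.divisors (∑ d ∈ Nat.divisors n, d), d) = 2 * n ↔
      ∃ p : ℕ, Nat.Prime (2 ^ p - 1) ∧ n = 2 ^ (p - 1) := by
  simp only [← sigma_one_apply]
  constructor
  · intro h
    obtain ⟨k, m, hmodd, rfl⟩ := Nat.exists_eq_two_pow_mul_odd hn.ne'
    have hm0 : 0 < m := Nat.pos_of_mul_pos_left (by rwa [mul_comm] at hn)
    have hk : 1 ≤ k := by
      rcases Nat.eq_zero_or_pos k with rfl | h1
      · simp only [pow_zero, one_mul] at heven
        exact absurd heven (Nat.not_even_iff_odd.mpr hmodd)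
      · exact h1
    have hcop : Nat.Coprime (2 ^ k) m :=
      Nat.Coprime.pow_left _ (Nat.coprime_two_left.mpr hmodd)
    have hmul : σ 1 (2 ^ k * m) = (2 ^ (k + 1) - 1) * σ 1 m := by
      rw [isMultiplicative_sigma.map_mul_of_coprime hcop, sigma_one_two_pow]
    have h4 : (4:ℕ) ≤ 2 ^ (k + 1) := by
      calc (4:ℕ) = 2 ^ 2 := rfl
        _ ≤ 2 ^ (k + 1) := Nat.pow_le_pow_right (by norm_num) (by omega)
    by_cases hm1 : m = 1
    · subst hm1
      rw [mul_one] at h ⊢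
      rw [sigma_one_two_pow] at h
      have h2k : 2 * 2 ^ k = 2 ^ (k + 1) := by ring
      have hp : (2 ^ (k + 1) - 1).Prime := by
        apply prime_of_sigma_one (by omega)
        rw [h, h2k]
        omega
      exact ⟨k + 1, hp, by simp⟩
    · exfalso
      have hm2 : 1 < m := by omega
      set S := σ 1 m with hSdef
      have hSge : m + 1 ≤ S := le_sigma_one hm2
      set N := (2 ^ (k + 1) - 1) * S with hNdef
      have h1S : 1 < S := by omega
      have hSN : S < N := by
        calc S < 3 * S := by omega
          _ ≤ N := Nat.mul_le_mul_right _ (by omega)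
      have hbound := three_divisors_le (N := N) (S := S)
        (Nat.mul_ne_zero (by omega) (by omega)) (Dvd.intro_left _ rfl) h1S hSN
      rw [hmul] at h
      rw [h] at hbound
      have hNS : N + S = 2 ^ (k + 1) * S := by
        rw [hNdef, Nat.sub_one_mul]
        have : S ≤ 2 ^ (k + 1) * S := Nat.le_mul_of_pos_left _ (by positivity)
        omega
      have hSm : 2 ^ (k + 1) * (m + 1) ≤ 2 ^ (k + 1) * S :=
        Nat.mul_le_mul_left _ hSge
      have h2k : 2 * (2 ^ k * m) = 2 ^ (k + 1) * m := by ring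
      rw [h2k] at hbound
      have : 2 ^ (k + 1) * (m + 1) = 2 ^ (k + 1) * m + 2 ^ (k + 1) := by ring
      omega
  · rintro ⟨p, hp, rfl⟩
    have hp2 : 2 ≤ p := by
      by_contra hc
      interval_cases p <;> simp_all <;> exact Nat.not_prime_one hp
    rw [sigma_one_two_pow, show p - 1 + 1 = p from by omega, sigma_one_prime hp]
    have h1 : (1:ℕ) ≤ 2 ^ p := Nat.one_le_two_pow
    have h2 : (2:ℕ) ^ p = 2 * 2 ^ (p - 1) := by
      rw [← pow_succ']
      congr 1
      omega
    omega
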